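/- Let M_1 = (E, I_1), …, M_k = (E, I_k) be matroids on a common finite ground set E partitioned among n players, with feasible sets I = I_1 ∩ … ∩ I_k, and let each player i have an XOS valuation v_i : 2^{E_i} → ℝ≥0. Then there exist deviation bid profiles b*_i : E_i → ℝ≥0 (depending only on the valuation profile v) such that for every bid profile b : E → ℝ≥0, every S ∈ I maximizing Σ_{t∈S} b_t over I, and, for each i, every S^i ∈ I maximizing total weight under the profile that equals b*_i on E_i and b on E ∖ E_i, the following holds: Σ_{i=1}^n [ v_i(S^i ∩ E_i) − Σ_{t∈S^i∩E_i} b*_i(t) ] ≥ (1/(k+2))·OPT(v) − Σ_{t∈S} b_t. (The optimal first-price mechanism over the intersection of k matroids is (1/(k+2), 1)-smooth for XOS valuations.) -/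

import Mathlib

/-- A matroid on a finite ground set, given by its family of independent sets. -/
structure FinMatroid (E : Type*) [DecidableEq E] [Fintype E] where
  Indep : Finset E → Prop
  empty_indep : Indep ∅
  indep_subset : ∀ ⦃A B : Finset E⦄, Indep B → A ⊆ B → Indep A
  indep_exchange : ∀ ⦃A B : Finset E⦄, Indep A → Indep B → A.card < B.card →
    ∃ x ∈ B \ A, Indep (insert x A)

/-- `v` is an XOS (fractionally subadditive) valuation: a pointwise maximum of a
finite nonempty family of additive valuations with nonnegative weights. -/
def IsXOS {E : Type*} [DecidableEq E] (v : Finset E → ℝ) : Prop :=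
  ∃ L : Finset (E → ℝ), L.Nonempty ∧ (∀ w ∈ L, ∀ t, 0 ≤ w t) ∧
    ∀ X : Finset E, (∃ w ∈ L, v X = ∑ t ∈ X, w t) ∧ (∀ w ∈ L, ∑ t ∈ X, w t ≤ v X)

open Finset

namespace FinMatroid

variable {E : Type*} [DecidableEq E] [Fintype E] (M : FinMatroid E)

/-- Any independent subset of `G` extends to a maximal one. -/
lemma exists_maximal {A G : Finset E} (hA : M.Indep A) (hAG : A ⊆ G) :
    ∃ W : Finset E, A ⊆ W ∧ W ⊆ G ∧ M.Indep W ∧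
      ∀ x ∈ G, x ∉ W → ¬ M.Indep (insert x W) := by
  classical
  have hne : ((G.powerset.filter (fun W => A ⊆ W ∧ M.Indep W))).Nonempty := by
    refine ⟨A, ?_⟩
    simp [Finset.mem_filter, Finset.mem_powerset, hAG, hA]
  obtain ⟨W, hWmem, hWmax⟩ := Finset.exists_max_image _ Finset.card hne
  simp only [Finset.mem_filter, Finset.mem_powerset] at hWmem
  obtain ⟨hWG, hAW, hWI⟩ := hWmem
  refine ⟨W, hAW, hWG, hWI, ?_⟩
  intro x hxG hxW hind
  have hmem : insert x W ∈ G.powerset.filter (fun W => A ⊆ W ∧ M.Indep W) := by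
    simp only [Finset.mem_filter, Finset.mem_powerset]
    exact ⟨Finset.insert_subset hxG hWG, hAW.trans (Finset.subset_insert _ _), hind⟩
  have := hWmax _ hmem
  rw [Finset.card_insert_of_notMem hxW] at this
  omega

/-- A maximal independent subset of `G` has at least the cardinality of any
independent subset of `G`. -/
lemma card_le_of_maximal {G W V : Finset E} (hWI : M.Indep W)
    (hmax : ∀ x ∈ G, x ∉ W → ¬ M.Indep (insert x W)) (hVG : V ⊆ G) (hVI : M.Indep V) :
    V.card ≤ W.card := by
  by_contra h
  push_neg at h
  obtain ⟨x, hx, hxI⟩ := M.indep_exchange hWI hVI h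
  rw [Finset.mem_sdiff] at hx
  exact hmax x (hVG hx.1) hx.2 hxI

open Classical in
/-- Rank of a set: maximal size of an independent subset. -/
noncomputable def rk (G : Finset E) : ℕ :=
  (G.powerset.filter M.Indep).sup Finset.card

lemma le_rk {G V : Finset E} (hVG : V ⊆ G) (hVI : M.Indep V) : V.card ≤ M.rk G := by
  classical
  have : V ∈ (G.powerset.filter M.Indep) := by
    simp [Finset.mem_filter, Finset.mem_powerset, hVG, hVI]
  exact Finset.le_sup (f := Finset.card) this

lemma rk_eq_of_maximal {G W : Finset E} (hWG : W ⊆ G) (hWI : M.Indep W)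
    (hmax : ∀ x ∈ G, x ∉ W → ¬ M.Indep (insert x W)) : M.rk G = W.card := by
  classical
  apply le_antisymm
  · refine Finset.sup_le ?_
    intro V hV
    rw [Finset.mem_filter, Finset.mem_powerset] at hV
    exact card_le_of_maximal M hWI hmax hV.1 hV.2
  · exact le_rk M hWG hWI

lemma rk_indep {A : Finset E} (hA : M.Indep A) : M.rk A = A.card := by
  refine rk_eq_of_maximal M (le_refl _) hA ?_
  intro x hx hxn
  exact absurd hx hxn

lemma rk_mono {G G' : Finset E} (h : G ⊆ G') : M.rk G ≤ M.rk G' := by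
  classical
  refine Finset.sup_le ?_
  intro V hV
  rw [Finset.mem_filter, Finset.mem_powerset] at hV
  exact le_rk M (hV.1.trans h) hV.2

lemma rk_submodular (X Y : Finset E) :
    M.rk (X ∪ Y) + M.rk (X ∩ Y) ≤ M.rk X + M.rk Y := by
  classical
  obtain ⟨B0, -, hB0sub, hB0I, hB0max⟩ :=
    exists_maximal M M.empty_indep (Finset.empty_subset (X ∩ Y))
  obtain ⟨B, hB0B, hBsub, hBI, hBmax⟩ :=
    exists_maximal M hB0I (hB0sub.trans (Finset.inter_subset_union))
  have hrXY : M.rk (X ∪ Y) = B.card := rk_eq_of_maximal M hBsub hBI hBmax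
  have hBinter : B ∩ (X ∩ Y) = B0 := by
    apply Finset.Subset.antisymm
    · intro x hx
      rw [Finset.mem_inter] at hx
      by_contra hxB0
      exact hB0max x hx.2 hxB0 (M.indep_subset hBI (Finset.insert_subset hx.1 hB0B))
    · exact Finset.subset_inter hB0B hB0sub
  have hrI : M.rk (X ∩ Y) = B0.card := rk_eq_of_maximal M hB0sub hB0I hB0max
  have h1 : (B ∩ X).card ≤ M.rk X :=
    le_rk M (Finset.inter_subset_right) (M.indep_subset hBI Finset.inter_subset_left)
  have h2 : (B ∩ Y).card ≤ M.rk Y :=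
    le_rk M (Finset.inter_subset_right) (M.indep_subset hBI Finset.inter_subset_left)
  have hcard : (B ∩ X).card + (B ∩ Y).card = B.card + B0.card := by
    have hu : (B ∩ X) ∪ (B ∩ Y) = B := by
      rw [← Finset.inter_union_distrib_left]
      exact Finset.inter_eq_left.mpr hBsub
    have hi : (B ∩ X) ∩ (B ∩ Y) = B0 := by
      rw [← hBinter]
      ext x
      simp only [Finset.mem_inter]
      tauto
    calc (B ∩ X).card + (B ∩ Y).card
        = ((B ∩ X) ∪ (B ∩ Y)).card + ((B ∩ X) ∩ (B ∩ Y)).card :=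
          (Finset.card_union_add_card_inter _ _).symm
      _ = B.card + B0.card := by rw [hu, hi]
  omega

end FinMatroid

namespace FinMatroid

variable {E : Type*} [DecidableEq E] [Fintype E] (M : FinMatroid E)

lemma rk_union_of_con_maximal {P Y W : Finset E}
    (hWP : W ⊆ P) (hdisj : Disjoint W Y) (hWI : M.Indep (W ∪ Y))
    (hmax : ∀ x ∈ P, x ∉ W → x ∉ Y → ¬ M.Indep (insert x (W ∪ Y))) :
    M.rk (P ∪ Y) = W.card + Y.card := by
  classical
  apply le_antisymm
  · obtain ⟨Z, hWYZ, hZsub, hZI, hZmax⟩ :=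
      exists_maximal M hWI (Finset.union_subset_union hWP (le_refl Y))
    have hrk : M.rk (P ∪ Y) = Z.card := rk_eq_of_maximal M hZsub hZI hZmax
    have hYZ : Y ⊆ Z := (Finset.subset_union_right).trans hWYZ
    have hZeq : (Z \ Y) ∪ Y = Z := Finset.sdiff_union_of_subset hYZ
    have hVcard : (Z \ Y).card ≤ W.card := by
      by_contra h
      push_neg at h
      have hcards : (W ∪ Y).card < ((Z \ Y) ∪ Y).card := by
        rw [Finset.card_union_of_disjoint hdisj,
          Finset.card_union_of_disjoint Finset.sdiff_disjoint]
        omega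
      rw [hZeq] at hcards
      obtain ⟨x, hx, hxI⟩ := M.indep_exchange hWI hZI hcards
      rw [Finset.mem_sdiff, Finset.mem_union] at hx
      push_neg at hx
      have hxZ := hx.1
      have hxW := hx.2.1
      have hxY := hx.2.2
      have hxP : x ∈ P := by
        have := hZsub hxZ
        rw [Finset.mem_union] at this
        tauto
      exact hmax x hxP hxW hxY hxI
    have hZcard : (Z \ Y).card + Y.card = Z.card :=
      Finset.card_sdiff_add_card_eq_card hYZ
    omega
  · have := le_rk M (G := P ∪ Y) (V := W ∪ Y)
      (Finset.union_subset_union hWP (le_refl Y)) hWI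
    rwa [Finset.card_union_of_disjoint hdisj] at this

open Classical in
/-- Greedy construction: scan the list, keep an element if it stays independent
jointly with `Y`. -/
noncomputable def greedyAux (Y : Finset E) : List E → Finset E → Finset E
  | [], acc => acc
  | x :: xs, acc =>
      greedyAux Y xs (if x ∉ Y ∧ M.Indep (insert x (acc ∪ Y)) then insert x acc else acc)

lemma greedyAux_append (Y : Finset E) (l₁ l₂ : List E) (acc : Finset E) :
    greedyAux M Y (l₁ ++ l₂) acc = greedyAux M Y l₂ (greedyAux M Y l₁ acc) := by
  induction l₁ generalizing acc with
  | nil => rfl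
  | cons x xs ih => simp [greedyAux, ih]

lemma subset_greedyAux (Y : Finset E) (l : List E) (acc : Finset E) :
    acc ⊆ greedyAux M Y l acc := by
  induction l generalizing acc with
  | nil => exact Finset.Subset.refl _
  | cons x xs ih =>
      refine Finset.Subset.trans ?_ (ih _)
      split
      · exact Finset.subset_insert _ _
      · exact Finset.Subset.refl _

lemma greedyAux_subset (Y : Finset E) (l : List E) (acc : Finset E) :
    greedyAux M Y l acc ⊆ acc ∪ l.toFinset := by
  induction l generalizing acc with
  | nil => simp [greedyAux]
  | cons x xs ih =>
      refine le_trans (ih _) ?_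
      intro t ht
      rw [Finset.mem_union] at ht
      simp only [List.toFinset_cons, Finset.mem_union, Finset.mem_insert] at *
      rcases ht with h | h
      · split at h
        · rw [Finset.mem_insert] at h
          tauto
        · tauto
      · tauto

lemma greedyAux_indep (Y : Finset E) (l : List E) (acc : Finset E)
    (h : M.Indep (acc ∪ Y)) : M.Indep (greedyAux M Y l acc ∪ Y) := by
  induction l generalizing acc with
  | nil => exact h
  | cons x xs ih =>
      simp only [greedyAux]
      split
      · rename_i hcond
        refine ih _ ?_
        rw [Finset.insert_union]
        exact hcond.2
      · exact ih _ h

lemma greedyAux_disj (Y : Finset E) (l : List E) (acc : Finset E)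
    (h : Disjoint acc Y) : Disjoint (greedyAux M Y l acc) Y := by
  induction l generalizing acc with
  | nil => exact h
  | cons x xs ih =>
      simp only [greedyAux]
      split
      · rename_i hcond
        exact ih _ (Finset.disjoint_insert_left.mpr ⟨hcond.1, h⟩)
      · exact ih _ h

lemma greedyAux_maximal (Y : Finset E) (l : List E) (acc : Finset E) :
    ∀ x ∈ l, x ∉ greedyAux M Y l acc → x ∉ Y →
      ¬ M.Indep (insert x (greedyAux M Y l acc ∪ Y)) := by
  induction l generalizing acc with
  | nil => intro x hx; simp at hx
  | cons a xs ih =>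
      intro x hx hxK hxY hxI
      simp only [greedyAux] at hxK hxI
      by_cases hcond : a ∉ Y ∧ M.Indep (insert a (acc ∪ Y))
      · rw [if_pos hcond] at hxK hxI
        rcases List.mem_cons.mp hx with rfl | hxs
        · exact hxK (subset_greedyAux M Y xs _ (Finset.mem_insert_self x acc))
        · exact ih _ x hxs hxK hxY hxI
      · rw [if_neg hcond] at hxK hxI
        rcases List.mem_cons.mp hx with rfl | hxs
        · push_neg at hcond
          refine hcond hxY (M.indep_subset hxI ?_)
          exact Finset.insert_subset_insert _
            (Finset.union_subset_union (subset_greedyAux M Y xs acc) (Finset.Subset.refl _))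
        · exact ih _ x hxs hxK hxY hxI

end FinMatroid

namespace FinMatroid

variable {E : Type*} [DecidableEq E] [Fintype E] (M : FinMatroid E)

lemma greedy_prefix_inter (Y : Finset E) (l : List E) (hl : l.Nodup) (m : ℕ) :
    (greedyAux M Y l ∅) ∩ (l.take m).toFinset = greedyAux M Y (l.take m) ∅ := by
  classical
  have hsplit : l = l.take m ++ l.drop m := (List.take_append_drop m l).symm
  have hK : greedyAux M Y l ∅ = greedyAux M Y (l.drop m) (greedyAux M Y (l.take m) ∅) := by
    conv_lhs => rw [hsplit]
    rw [greedyAux_append]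
  have hdisj : ∀ x, x ∈ l.drop m → x ∈ l.take m → False := by
    intro x h1 h2
    have : (l.take m ++ l.drop m).Nodup := by rw [← hsplit]; exact hl
    rw [List.nodup_append] at this
    exact this.2.2 x h2 x h1 rfl
  apply Finset.Subset.antisymm
  · intro x hx
    rw [Finset.mem_inter] at hx
    have hx1 := hx.1
    rw [hK] at hx1
    have := greedyAux_subset M Y (l.drop m) (greedyAux M Y (l.take m) ∅) hx1
    rw [Finset.mem_union] at this
    rcases this with h | h
    · exact h
    · rw [List.mem_toFinset] at h
      exact absurd (hdisj x h (List.mem_toFinset.mp hx.2)) (by simp)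
  · intro x hx
    rw [Finset.mem_inter]
    constructor
    · rw [hK]
      exact subset_greedyAux M Y _ _ hx
    · have := greedyAux_subset M Y (l.take m) ∅ hx
      rw [Finset.empty_union] at this
      exact this

lemma greedy_prefix_rk (Y : Finset E) (hY : M.Indep Y) (l : List E) (hl : l.Nodup) (m : ℕ) :
    M.rk ((l.take m).toFinset ∪ Y) + Y.card
      = ((greedyAux M Y l ∅) ∩ (l.take m).toFinset).card + Y.card + Y.card := by
  classical
  rw [greedy_prefix_inter M Y l hl m]
  set W := greedyAux M Y (l.take m) ∅ with hW
  have hWsub : W ⊆ (l.take m).toFinset := by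
    have := greedyAux_subset M Y (l.take m) ∅
    rwa [Finset.empty_union] at this
  have hWdisj : Disjoint W Y := greedyAux_disj M Y _ _ (Finset.disjoint_left.mpr (by simp))
  have hWI : M.Indep (W ∪ Y) := greedyAux_indep M Y _ _ (by rwa [Finset.empty_union])
  have hmax : ∀ x ∈ (l.take m).toFinset, x ∉ W → x ∉ Y → ¬ M.Indep (insert x (W ∪ Y)) := by
    intro x hx hxW hxY
    exact greedyAux_maximal M Y (l.take m) ∅ x (List.mem_toFinset.mp hx) hxW hxY
  rw [rk_union_of_con_maximal M hWsub hWdisj hWI hmax]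

lemma claim1 (O : Finset E) (hO : M.Indep O) {n : ℕ} (player : E → Fin n)
    (P : Finset E) (hP : M.Indep P) (s : Finset (Fin n)) :
    (∑ i ∈ s, (P.card + (O.filter (fun t => player t = i)).card))
        + M.rk (P ∪ O.filter (fun t => player t ∈ s))
      ≤ (∑ i ∈ s, M.rk (P ∪ O.filter (fun t => player t = i)))
        + P.card + (O.filter (fun t => player t ∈ s)).card := by
  classical
  induction s using Finset.induction_on with
  | empty =>
      simp only [Finset.sum_empty, Finset.notMem_empty]
      have : O.filter (fun t => False) = ∅ := Finset.filter_false O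
      simp only [this, Finset.union_empty, rk_indep M hP, Finset.card_empty]
      omega
  | insert i s hi ih =>
      have hOis : O.filter (fun t => player t ∈ insert i s)
          = O.filter (fun t => player t = i) ∪ O.filter (fun t => player t ∈ s) := by
        ext t
        simp only [Finset.mem_filter, Finset.mem_union, Finset.mem_insert]
        tauto
      have hdisj : Disjoint (O.filter (fun t => player t = i)) (O.filter (fun t => player t ∈ s)) := by
        rw [Finset.disjoint_left]
        intro t ht1 ht2
        rw [Finset.mem_filter] at ht1 ht2
        exact hi (ht1.2 ▸ ht2.2)
      have hcard : (O.filter (fun t => player t ∈ insert i s)).card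
          = (O.filter (fun t => player t = i)).card + (O.filter (fun t => player t ∈ s)).card := by
        rw [hOis, Finset.card_union_of_disjoint hdisj]
      have hsub := rk_submodular M (P ∪ O.filter (fun t => player t = i))
        (P ∪ O.filter (fun t => player t ∈ s))
      have hu : (P ∪ O.filter (fun t => player t = i)) ∪ (P ∪ O.filter (fun t => player t ∈ s))
          = P ∪ O.filter (fun t => player t ∈ insert i s) := by
        rw [hOis]
        exact (Finset.union_union_distrib_left P _ _).symm
      have hint : (P ∪ O.filter (fun t => player t = i)) ∩ (P ∪ O.filter (fun t => player t ∈ s))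
          = P := by
        rw [← Finset.union_inter_distrib_left, Finset.disjoint_iff_inter_eq_empty.mp hdisj,
          Finset.union_empty]
      rw [hu, hint, rk_indep M hP] at hsub
      rw [Finset.sum_insert hi, Finset.sum_insert hi, hcard]
      omega

lemma abel_aux (c : ℕ → ℝ) (hc0 : ∀ m, 0 ≤ c m) (hcmono : ∀ m, c (m+1) ≤ c m)
    (F : ℕ → ℕ) (hF0 : F 0 = 0) (hFmono : ∀ m, F m ≤ F (m+1)) (hFle : ∀ m, F m ≤ m) :
    ∀ Mlen, (∑ m ∈ Finset.range Mlen, c m * ((F (m+1) : ℝ) - F m))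
      ≤ (∑ m ∈ Finset.range Mlen, c m) - c Mlen * ((Mlen : ℝ) - F Mlen) := by
  intro Mlen
  induction Mlen with
  | zero => simp [hF0]
  | succ N ih =>
      rw [Finset.sum_range_succ, Finset.sum_range_succ (f := c)]
      have h1 : (F (N+1) : ℝ) ≤ (N : ℝ) + 1 := by
        have := hFle (N+1); push_cast; exact_mod_cast Nat.cast_le.mpr this
      have h2 : (F N : ℝ) ≤ (F (N+1) : ℝ) := Nat.cast_le.mpr (hFmono N)
      have h3 : (F N : ℝ) ≤ (N : ℝ) := Nat.cast_le.mpr (hFle N)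
      have h4 : c (N+1) ≤ c N := hcmono N
      have h5 : 0 ≤ c (N+1) := hc0 (N+1)
      have h6 : 0 ≤ c N := hc0 N
      push_cast
      nlinarith [ih]

lemma abel (c : ℕ → ℝ) (hc0 : ∀ m, 0 ≤ c m) (hcmono : ∀ m, c (m+1) ≤ c m)
    (F : ℕ → ℕ) (hF0 : F 0 = 0) (hFmono : ∀ m, F m ≤ F (m+1)) (hFle : ∀ m, F m ≤ m)
    (Mlen : ℕ) : (∑ m ∈ Finset.range Mlen, c m * ((F (m+1) : ℝ) - F m))
      ≤ ∑ m ∈ Finset.range Mlen, c m := by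
  have h := abel_aux c hc0 hcmono F hF0 hFmono hFle Mlen
  have : 0 ≤ c Mlen * ((Mlen : ℝ) - F Mlen) := by
    apply mul_nonneg (hc0 _)
    have := hFle Mlen
    have := Nat.cast_le (α := ℝ).mpr this
    linarith
  linarith

end FinMatroid

section Helpers

variable {E : Type*} [DecidableEq E] [Fintype E]

lemma exists_sorted_list (S : Finset E) (b : E → ℝ) :
    ∃ l : List E, l.Nodup ∧ l.toFinset = S ∧ l.Pairwise (fun x y => b y ≤ b x) := by
  classical
  obtain ⟨n, hn⟩ : ∃ n, S.card = n := ⟨_, rfl⟩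
  induction n using Nat.strong_induction_on generalizing S with
  | _ n ih =>
    rcases Finset.eq_empty_or_nonempty S with rfl | hSne
    · exact ⟨[], by simp⟩
    obtain ⟨t, htS, htmax⟩ := S.exists_max_image b hSne
    obtain ⟨l', hl'nd, hl'fin, hl'sorted⟩ := ih (S.erase t).card
      (by rw [← hn]; exact Finset.card_erase_lt_of_mem htS) (S.erase t) rfl
    refine ⟨t :: l', ?_, ?_, ?_⟩
    · rw [List.nodup_cons]
      refine ⟨?_, hl'nd⟩
      rw [← List.mem_toFinset, hl'fin]
      simp
    · rw [List.toFinset_cons, hl'fin, Finset.insert_erase htS]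
    · rw [List.pairwise_cons]
      refine ⟨?_, hl'sorted⟩
      intro x hx
      have : x ∈ S.erase t := by rw [← hl'fin]; exact List.mem_toFinset.mpr hx
      exact htmax x (Finset.mem_of_mem_erase this)

lemma list_sum_eq (l : List E) (hl : l.Nodup) (g : E → ℝ) :
    ∑ t ∈ l.toFinset, g t
      = ∑ m ∈ Finset.range l.length, (if h : m < l.length then g (l.get ⟨m, h⟩) else 0) := by
  classical
  induction l with
  | nil => simp
  | cons a tl ih =>
      have hand : a ∉ tl.toFinset := by
        rw [List.mem_toFinset]
        exact (List.nodup_cons.mp hl).1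
      rw [List.toFinset_cons, Finset.sum_insert hand, ih (List.nodup_cons.mp hl).2]
      simp only [List.length_cons]
      rw [Finset.sum_range_succ', add_comm (g a)]
      congr 1
      · apply Finset.sum_congr rfl
        intro m hm
        rw [Finset.mem_range] at hm
        rw [dif_pos (by omega : m < tl.length), dif_pos (by omega : m + 1 < tl.length + 1)]
        rfl

end Helpers

open FinMatroid in
lemma lemA {E : Type*} [DecidableEq E] [Fintype E] (M : FinMatroid E)
    {S O : Finset E} (hS : M.Indep S) (hO : M.Indep O)
    (b : E → ℝ) (hb : ∀ t, 0 ≤ b t) {n : ℕ} (player : E → Fin n) :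
    ∃ K : Fin n → Finset E,
      (∀ i, K i ⊆ S ∧ M.Indep (K i ∪ O.filter (fun t => player t = i))) ∧
      (∑ i : Fin n, ∑ t ∈ S \ K i, b t) ≤ ∑ t ∈ S, b t := by
  classical
  obtain ⟨l, hlnd, hlS, hlsort⟩ := exists_sorted_list S b
  set L := l.length with hL
  set Y : Fin n → Finset E := fun i => O.filter (fun t => player t = i) with hYdef
  have hYI : ∀ i, M.Indep (Y i) := fun i => M.indep_subset hO (Finset.filter_subset _ _)
  set K : Fin n → Finset E := fun i => greedyAux M (Y i) l ∅ with hKdef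
  have hKsub : ∀ i, K i ⊆ S := by
    intro i
    have := greedyAux_subset M (Y i) l ∅
    rwa [Finset.empty_union, hlS] at this
  have hKI : ∀ i, M.Indep (K i ∪ Y i) := fun i =>
    greedyAux_indep M (Y i) l ∅ (by rw [Finset.empty_union]; exact hYI i)
  refine ⟨K, fun i => ⟨hKsub i, hKI i⟩, ?_⟩
  -- prefixes
  set P : ℕ → Finset E := fun m => (l.take m).toFinset with hPdef
  have hPsub : ∀ m, P m ⊆ S := by
    intro m t ht
    rw [← hlS, List.mem_toFinset]
    exact List.take_subset m l (List.mem_toFinset.mp ht)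
  have hPI : ∀ m, M.Indep (P m) := fun m => M.indep_subset hS (hPsub m)
  have hPcard : ∀ m, (P m).card = min m L := by
    intro m
    have hnd : (l.take m).Nodup := hlnd.sublist (List.take_sublist m l)
    rw [hPdef]
    simp only [List.toFinset_card_of_nodup hnd, List.length_take]
    rfl
  set a : Fin n → ℕ → ℕ := fun i m => (K i ∩ P m).card with hadef
  have ha_le : ∀ i m, a i m ≤ min m L := by
    intro i m
    rw [← hPcard m]
    exact Finset.card_le_card Finset.inter_subset_right
  have hrk : ∀ i m, M.rk (P m ∪ Y i) = a i m + (Y i).card := by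
    intro i m
    have h2 := greedy_prefix_rk M (Y i) (hYI i) l hlnd m
    simp only [hPdef, hadef, hKdef]
    omega
  -- step structure of prefixes
  have hstep : ∀ m, m < L → ∀ h : m < l.length,
      P (m+1) = insert (l.get ⟨m, h⟩) (P m) := by
    intro m hm h
    rw [hPdef]
    simp only
    rw [List.take_succ, List.getElem?_eq_getElem h, List.toFinset_append, Finset.union_comm]
    simp [← Finset.insert_eq, List.get_eq_getElem]
  have hget_notmem : ∀ m (h : m < L), l.get ⟨m, h⟩ ∉ P m := by
    intro m h hmem
    have h1 : (P (m+1)).card = min (m+1) L := hPcard (m+1)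
    have h2 : (P m).card = min m L := hPcard m
    rw [hstep m h h, Finset.insert_eq_self.mpr hmem] at h1
    omega
  -- increments of a
  have ha_succ_mem : ∀ i m (h : m < L), l.get ⟨m, h⟩ ∈ K i → a i (m+1) = a i m + 1 := by
    intro i m h hmem
    rw [hadef]
    simp only
    rw [hstep m h h, Finset.inter_insert_of_mem hmem]
    rw [Finset.card_insert_of_notMem (fun hc => hget_notmem m h (Finset.mem_of_mem_inter_right hc))]
  have ha_succ_notmem : ∀ i m (h : m < L), l.get ⟨m, h⟩ ∉ K i → a i (m+1) = a i m := by
    intro i m h hmem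
    rw [hadef]
    simp only
    rw [hstep m h h, Finset.inter_insert_of_notMem hmem]
  have ha_succ_ge : ∀ i m, m ≥ L → a i (m+1) = a i m := by
    intro i m hm
    have : l.take (m+1) = l.take m := by
      rw [List.take_of_length_le (by omega), List.take_of_length_le (by omega)]
    rw [hadef]
    simp only [hPdef, this]
  -- the counting function
  set F : ℕ → ℕ := fun m => ∑ i : Fin n, (min m L - a i m) with hFdef
  have hF0 : F 0 = 0 := by
    rw [hFdef]
    simp
  have hFmono : ∀ m, F m ≤ F (m+1) := by
    intro m
    rw [hFdef]
    simp only
    apply Finset.sum_le_sum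
    intro i _
    by_cases hm : m < L
    · by_cases hmem : l.get ⟨m, hm⟩ ∈ K i
      · rw [ha_succ_mem i m hm hmem]
        omega
      · rw [ha_succ_notmem i m hm hmem]
        omega
    · rw [ha_succ_ge i m (by omega)]
      omega
  have hFle : ∀ m, F m ≤ m := by
    intro m
    have hclaim := claim1 M O hO player (P m) (hPI m) Finset.univ
    have hOfil : O.filter (fun t => player t ∈ Finset.univ) = O :=
      Finset.filter_true_of_mem (fun t _ => Finset.mem_univ _)
    rw [hOfil] at hclaim
    have hrkO : O.card ≤ M.rk (P m ∪ O) := le_rk M Finset.subset_union_right hO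
    have hsum1 : ∑ i : Fin n, ((P m).card + (Y i).card)
        = n * min m L + ∑ i : Fin n, (Y i).card := by
      rw [Finset.sum_add_distrib, Finset.sum_const, Finset.card_univ, Fintype.card_fin,
        smul_eq_mul, hPcard]
    have hsum2 : ∑ i : Fin n, M.rk (P m ∪ Y i)
        = (∑ i : Fin n, a i m) + ∑ i : Fin n, (Y i).card := by
      rw [← Finset.sum_add_distrib]
      exact Finset.sum_congr rfl (fun i _ => hrk i m)
    rw [hsum1, hsum2, hPcard] at hclaim
    have hFa : F m + (∑ i : Fin n, a i m) = n * min m L := by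
      rw [hFdef]
      simp only
      rw [← Finset.sum_add_distrib]
      have : ∀ i ∈ Finset.univ, (min m L - a i m) + a i m = min m L := by
        intro i _
        have := ha_le i m
        omega
      rw [Finset.sum_congr rfl this, Finset.sum_const, Finset.card_univ, Fintype.card_fin,
        smul_eq_mul]
    omega
  -- the price sequence
  set c : ℕ → ℝ := fun m => if h : m < L then b (l.get ⟨m, h⟩) else 0 with hcdef
  have hc0 : ∀ m, 0 ≤ c m := by
    intro m
    rw [hcdef]
    dsimp only
    split
    · exact hb _
    · exact le_refl 0
  have hsorted' : ∀ (p q : Fin l.length), p < q → b (l.get q) ≤ b (l.get p) :=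
    List.pairwise_iff_get.mp hlsort
  have hcmono : ∀ m, c (m+1) ≤ c m := by
    intro m
    rw [hcdef]
    dsimp only
    by_cases h1 : m + 1 < L
    · rw [dif_pos h1, dif_pos (by omega : m < L)]
      exact hsorted' ⟨m, by omega⟩ ⟨m+1, h1⟩ (by simp)
    · rw [dif_neg h1]
      split
      · exact hb _
      · exact le_refl 0
  -- per-player sum identity
  have hsum_i : ∀ i, ∑ t ∈ S \ K i, b t
      = ∑ m ∈ Finset.range L, c m * ((↑(min (m+1) L - a i (m+1)) : ℝ) - ↑(min m L - a i m)) := by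
    intro i
    have h1 : S \ K i = S.filter (fun t => t ∉ K i) := by
      rw [Finset.sdiff_eq_filter]
    rw [h1, Finset.sum_filter, ← hlS,
      list_sum_eq l hlnd (fun t => if t ∉ K i then b t else 0)]
    apply Finset.sum_congr rfl
    intro m hm
    rw [Finset.mem_range] at hm
    rw [dif_pos hm]
    have hminm : min m L = m := by omega
    have hminm1 : min (m+1) L = m + 1 := by omega
    by_cases hmem : l.get ⟨m, hm⟩ ∈ K i
    · rw [if_neg (by simpa using hmem)]
      rw [ha_succ_mem i m hm hmem, hminm, hminm1]
      have hle := ha_le i m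
      rw [hminm] at hle
      have : (m + 1 - (a i m + 1)) = (m - a i m) := by omega
      rw [this, sub_self, mul_zero]
    · rw [if_pos hmem]
      rw [ha_succ_notmem i m hm hmem, hminm, hminm1]
      have hle := ha_le i m
      rw [hminm] at hle
      have hcast : ((↑(m + 1 - a i m) : ℝ) - ↑(m - a i m)) = 1 := by
        rw [Nat.cast_sub (by omega), Nat.cast_sub (by omega)]
        push_cast
        ring
      rw [hcast, mul_one, hcdef]
      dsimp only
      rw [dif_pos hm]
  -- assemble
  calc ∑ i : Fin n, ∑ t ∈ S \ K i, b t
      = ∑ m ∈ Finset.range L, c m * ((↑(F (m+1)) : ℝ) - ↑(F m)) := by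
        rw [Finset.sum_congr rfl (fun i _ => hsum_i i), Finset.sum_comm]
        apply Finset.sum_congr rfl
        intro m _
        rw [← Finset.mul_sum]
        congr 1
        rw [hFdef]
        push_cast
        rw [Finset.sum_sub_distrib]
    _ ≤ ∑ m ∈ Finset.range L, c m := abel c hc0 hcmono F hF0 hFmono hFle L
    _ = ∑ t ∈ S, b t := by
        rw [← hlS, list_sum_eq l hlnd b]



/-- **Smoothness of the optimal first-price mechanism over an intersection of `k`
matroids for XOS valuations.**  `Ms j` (`j : Fin k`) are matroids on the common
ground set `E`, whose common independent sets form the feasible family; the ground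
set is partitioned among `n` players via `player : E → Fin n`, each with an XOS
valuation.  `Sopt` is a welfare-optimal common independent set, so
`OPT(v) = Σ_i v_i(Sopt ∩ E_i)`.  There exist deviation bids `bstar i` (depending only
on the valuations) such that for every nonnegative bid profile `b`, every max-weight
common independent set `S` for `b` and, for each `i`, every max-weight common
independent set `Sdev i` for the profile where `i` deviates to `bstar i`:
`Σ_i [v_i(Sdev i ∩ E_i) − Σ_{t∈Sdev i ∩ E_i} bstar i t] ≥ (1/(k+2))·OPT(v) − Σ_{t∈S} b_t`,
i.e. the mechanism is `(1/(k+2), 1)`-smooth. -/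
theorem optimal_intersection_smooth_xos
    {E : Type*} [DecidableEq E] [Fintype E]
    (k : ℕ) (Ms : Fin k → FinMatroid E)
    (n : ℕ) (player : E → Fin n)
    (v : Fin n → Finset E → ℝ) (hv : ∀ i, IsXOS (v i))
    (Sopt : Finset E) (hSopt : ∀ j, (Ms j).Indep Sopt)
    (hSoptOpt : ∀ S : Finset E, (∀ j, (Ms j).Indep S) →
      (∑ i : Fin n, v i (S.filter (fun t => player t = i))) ≤
        ∑ i : Fin n, v i (Sopt.filter (fun t => player t = i))) :
    ∃ bstar : Fin n → E → ℝ, (∀ i t, 0 ≤ bstar i t) ∧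
      ∀ b : E → ℝ, (∀ t, 0 ≤ b t) →
      ∀ S : Finset E, (∀ j, (Ms j).Indep S) →
        (∀ S' : Finset E, (∀ j, (Ms j).Indep S') → ∑ t ∈ S', b t ≤ ∑ t ∈ S, b t) →
      ∀ Sdev : Fin n → Finset E,
        (∀ i, (∀ j, (Ms j).Indep (Sdev i)) ∧
          ∀ S' : Finset E, (∀ j, (Ms j).Indep S') →
            (∑ t ∈ S', if player t = i then bstar i t else b t) ≤
              ∑ t ∈ Sdev i, if player t = i then bstar i t else b t) →
        (∑ i : Fin n, (v i ((Sdev i).filter (fun t => player t = i)) -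
            ∑ t ∈ (Sdev i).filter (fun t => player t = i), bstar i t)) ≥
          (1/(k+2) : ℝ) * (∑ i : Fin n, v i (Sopt.filter (fun t => player t = i))) -
            ∑ t ∈ S, b t := by

  classical
  -- XOS witnesses for the optimal bundles
  have hwex : ∀ i : Fin n, ∃ w : E → ℝ, (∀ t, 0 ≤ w t) ∧
      v i (Sopt.filter (fun t => player t = i))
        = ∑ t ∈ Sopt.filter (fun t => player t = i), w t ∧
      ∀ X : Finset E, ∑ t ∈ X, w t ≤ v i X := by
    intro i
    obtain ⟨Lw, hLne, hLpos, hL⟩ := hv i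
    obtain ⟨w, hwL, hweq⟩ := (hL (Sopt.filter (fun t => player t = i))).1
    exact ⟨w, hLpos w hwL, hweq, fun X => (hL X).2 w hwL⟩
  choose w hw0 hweq hwle using hwex
  set κ : ℝ := (k : ℝ) with hκdef
  have hκ0 : (0:ℝ) ≤ κ := Nat.cast_nonneg k
  set cc : ℝ := (κ + 1) / (κ + 2) with hccdef
  have hcc0 : 0 < cc := by rw [hccdef]; positivity
  have hcc1 : cc < 1 := by
    rw [hccdef, div_lt_one (by positivity)]
    linarith
  refine ⟨fun i t => if t ∈ Sopt then cc * w i t else 0, ?_, ?_⟩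
  · intro i t
    dsimp only
    split
    · exact mul_nonneg hcc0.le (hw0 i t)
    · exact le_refl 0
  intro b hb S hSI hSmax Sdev hdev
  set O : Fin n → Finset E := fun i => Sopt.filter (fun t => player t = i) with hOdef
  set A : Fin n → Finset E := fun i => (Sdev i).filter (fun t => player t = i) with hAdef
  set σ : Fin n → ℝ := fun i =>
    ∑ t ∈ (Sdev i).filter (fun t => player t = i ∧ t ∈ Sopt), w i t with hσdef
  -- apply the single-matroid lemma to each matroid
  have hKex : ∀ j : Fin k, ∃ K : Fin n → Finset E,
      (∀ i, K i ⊆ S ∧ (Ms j).Indep (K i ∪ Sopt.filter (fun t => player t = i))) ∧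
      (∑ i : Fin n, ∑ t ∈ S \ K i, b t) ≤ ∑ t ∈ S, b t :=
    fun j => lemA (Ms j) (hSI j) (hSopt j) b hb player
  choose K hK1 hK2 using hKex
  set KI : Fin n → Finset E := fun i => S.filter (fun t => ∀ j, t ∈ K j i) with hKIdef
  have hKIS : ∀ i, KI i ⊆ S := fun i => Finset.filter_subset _ _
  set T : Fin n → Finset E := fun i => (KI i \ O i) ∪ O i with hTdef
  have hTI : ∀ i, ∀ j, (Ms j).Indep (T i) := by
    intro i j
    refine (Ms j).indep_subset (hK1 j i).2 ?_
    intro t ht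
    rw [hTdef] at ht
    simp only [Finset.mem_union, Finset.mem_sdiff] at ht
    rcases ht with ⟨ht1, -⟩ | ht2
    · rw [hKIdef] at ht1
      simp only [Finset.mem_filter] at ht1
      exact Finset.mem_union_left _ (ht1.2 j)
    · exact Finset.mem_union_right _ ht2
  -- the hybrid profile and its sums
  have hhyb : ∀ i : Fin n, ∀ (W : Finset E),
      ∑ t ∈ W, (if player t = i then (if t ∈ Sopt then cc * w i t else 0) else b t)
        = (∑ t ∈ W.filter (fun t => player t = i ∧ t ∈ Sopt), cc * w i t)
          + ∑ t ∈ W.filter (fun t => ¬ player t = i), b t := by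
    intro i W
    rw [← Finset.sum_filter_add_sum_filter_not W (fun t => player t = i)]
    congr 1
    · calc ∑ t ∈ W.filter (fun t => player t = i),
            (if player t = i then (if t ∈ Sopt then cc * w i t else 0) else b t)
          = ∑ t ∈ W.filter (fun t => player t = i), (if t ∈ Sopt then cc * w i t else 0) := by
            apply Finset.sum_congr rfl
            intro t ht
            rw [Finset.mem_filter] at ht
            rw [if_pos ht.2]
        _ = ∑ t ∈ (W.filter (fun t => player t = i)).filter (fun t => t ∈ Sopt), cc * w i t :=
            (Finset.sum_filter (fun t => t ∈ Sopt) (fun t => cc * w i t)).symm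
        _ = ∑ t ∈ W.filter (fun t => player t = i ∧ t ∈ Sopt), cc * w i t := by
            rw [Finset.filter_filter]
    · apply Finset.sum_congr rfl
      intro t ht
      rw [Finset.mem_filter] at ht
      rw [if_neg ht.2]
  -- per-player key inequality
  have hkey : ∀ i : Fin n,
      cc * v i (O i) ≤ cc * σ i + (∑ t ∈ S \ KI i, b t)
        + ∑ t ∈ S.filter (fun t => player t = i), b t := by
    intro i
    have hmax := (hdev i).2 (T i) (hTI i)
    -- upper bound the RHS of hmax
    have hrhs : (∑ t ∈ Sdev i, if player t = i then (if t ∈ Sopt then cc * w i t else 0) else b t)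
        ≤ cc * σ i + ∑ t ∈ S, b t := by
      rw [hhyb i (Sdev i)]
      have e1 : (∑ t ∈ (Sdev i).filter (fun t => player t = i ∧ t ∈ Sopt), cc * w i t)
          = cc * σ i := by
        rw [hσdef, Finset.mul_sum]
      have e2 : (∑ t ∈ (Sdev i).filter (fun t => ¬ player t = i), b t) ≤ ∑ t ∈ S, b t := by
        refine le_trans (Finset.sum_le_sum_of_subset_of_nonneg (Finset.filter_subset _ _)
          (fun t _ _ => hb t)) ?_
        exact hSmax (Sdev i) (hdev i).1
      rw [e1]
      linarith
    -- lower bound the LHS of hmax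
    have hlhs : cc * v i (O i) + (∑ t ∈ S.filter (fun t => ¬ player t = i), b t)
          - (∑ t ∈ S \ KI i, b t)
        ≤ ∑ t ∈ T i, (if player t = i then (if t ∈ Sopt then cc * w i t else 0) else b t) := by
      rw [hTdef]
      rw [Finset.sum_union (Finset.sdiff_disjoint)]
      have e3 : (∑ t ∈ O i, (if player t = i then (if t ∈ Sopt then cc * w i t else 0) else b t))
          = cc * v i (O i) := by
        rw [hweq i, Finset.mul_sum]
        apply Finset.sum_congr rfl
        intro t ht
        rw [hOdef] at ht
        simp only [Finset.mem_filter] at ht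
        rw [if_pos ht.2, if_pos ht.1]
      have e4 : (∑ t ∈ S.filter (fun t => ¬ player t = i), b t) - (∑ t ∈ S \ KI i, b t)
          ≤ ∑ t ∈ KI i \ O i, (if player t = i then (if t ∈ Sopt then cc * w i t else 0) else b t) := by
        have e5 : ∑ t ∈ (KI i \ O i).filter (fun t => ¬ player t = i), b t
            ≤ ∑ t ∈ KI i \ O i, (if player t = i then (if t ∈ Sopt then cc * w i t else 0) else b t) := by
          have := hhyb i (KI i \ O i)
          rw [this]
          have hpos : 0 ≤ ∑ t ∈ (KI i \ O i).filter (fun t => player t = i ∧ t ∈ Sopt), cc * w i t :=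
            Finset.sum_nonneg (fun t _ => mul_nonneg hcc0.le (hw0 i t))
          linarith
        refine le_trans ?_ e5
        -- split S.filter(≠ i) along membership in KI i
        have hsplit : ∑ t ∈ S.filter (fun t => ¬ player t = i), b t
            = (∑ t ∈ (S.filter (fun t => ¬ player t = i)).filter (fun t => t ∈ KI i), b t)
              + ∑ t ∈ (S.filter (fun t => ¬ player t = i)).filter (fun t => t ∉ KI i), b t :=
          (Finset.sum_filter_add_sum_filter_not _ _ _).symm
        have h6 : (∑ t ∈ (S.filter (fun t => ¬ player t = i)).filter (fun t => t ∈ KI i), b t)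
            ≤ ∑ t ∈ (KI i \ O i).filter (fun t => ¬ player t = i), b t := by
          refine Finset.sum_le_sum_of_subset_of_nonneg ?_ (fun t _ _ => hb t)
          intro t ht
          simp only [Finset.mem_filter] at ht
          simp only [Finset.mem_filter, Finset.mem_sdiff]
          refine ⟨⟨ht.2, ?_⟩, ht.1.2⟩
          rw [hOdef]
          simp only [Finset.mem_filter]
          intro hc
          exact ht.1.2 hc.2
        have h7 : (∑ t ∈ (S.filter (fun t => ¬ player t = i)).filter (fun t => t ∉ KI i), b t)
            ≤ ∑ t ∈ S \ KI i, b t := by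
          refine Finset.sum_le_sum_of_subset_of_nonneg ?_ (fun t _ _ => hb t)
          intro t ht
          simp only [Finset.mem_filter] at ht
          simp only [Finset.mem_sdiff]
          exact ⟨ht.1.1, ht.2⟩
        linarith
      linarith
    have hS_split : (∑ t ∈ S.filter (fun t => player t = i), b t)
        + (∑ t ∈ S.filter (fun t => ¬ player t = i), b t) = ∑ t ∈ S, b t :=
      Finset.sum_filter_add_sum_filter_not S _ b
    linarith
  -- per-player utility lower bound
  have hutil : ∀ i : Fin n,
      (1 - cc) * σ i ≤ v i (A i) - ∑ t ∈ A i, (if t ∈ Sopt then cc * w i t else 0) := by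
    intro i
    have e1 : (∑ t ∈ A i, (if t ∈ Sopt then cc * w i t else 0)) = cc * σ i := by
      calc ∑ t ∈ A i, (if t ∈ Sopt then cc * w i t else 0)
          = ∑ t ∈ (A i).filter (fun t => t ∈ Sopt), cc * w i t :=
            (Finset.sum_filter (fun t => t ∈ Sopt) (fun t => cc * w i t)).symm
        _ = ∑ t ∈ (Sdev i).filter (fun t => player t = i ∧ t ∈ Sopt), cc * w i t := by
            simp only [hAdef, Finset.filter_filter]
        _ = cc * σ i := by rw [hσdef, Finset.mul_sum]
    have e2 : σ i ≤ v i (A i) := by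
      refine le_trans ?_ (hwle i (A i))
      rw [hσdef, hAdef]
      dsimp only
      refine Finset.sum_le_sum_of_subset_of_nonneg ?_ (fun t _ _ => hw0 i t)
      rw [← Finset.filter_filter]
      exact Finset.filter_subset _ _
    rw [e1]
    nlinarith [hcc1, hcc0.le]
  -- removal budget
  have hbudget : (∑ i : Fin n, ∑ t ∈ S \ KI i, b t) ≤ κ * ∑ t ∈ S, b t := by
    have hpt : ∀ i : Fin n, (∑ t ∈ S \ KI i, b t) ≤ ∑ j : Fin k, ∑ t ∈ S \ K j i, b t := by
      intro i
      have hR : ∀ t ∈ S \ KI i, b t ≤ ∑ j : Fin k, (if t ∈ K j i then 0 else b t) := by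
        intro t ht
        rw [Finset.mem_sdiff, hKIdef] at ht
        simp only [Finset.mem_filter] at ht
        have : ∃ j, t ∉ K j i := by
          by_contra hc
          push_neg at hc
          exact ht.2 ⟨ht.1, hc⟩
        obtain ⟨j0, hj0⟩ := this
        calc b t = (if t ∈ K j0 i then 0 else b t) := by rw [if_neg hj0]
          _ ≤ ∑ j : Fin k, (if t ∈ K j i then 0 else b t) := by
              refine Finset.single_le_sum (f := fun j => (if t ∈ K j i then 0 else b t)) ?_ (Finset.mem_univ j0)
              intro j _
              split
              · exact le_refl 0
              · exact hb t
      calc (∑ t ∈ S \ KI i, b t) ≤ ∑ t ∈ S \ KI i, ∑ j : Fin k, (if t ∈ K j i then 0 else b t) :=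
            Finset.sum_le_sum hR
        _ ≤ ∑ t ∈ S, ∑ j : Fin k, (if t ∈ K j i then 0 else b t) := by
            refine Finset.sum_le_sum_of_subset_of_nonneg (Finset.sdiff_subset) ?_
            intro t _ _
            refine Finset.sum_nonneg (fun j _ => ?_)
            split
            · exact le_refl 0
            · exact hb t
        _ = ∑ j : Fin k, ∑ t ∈ S, (if t ∈ K j i then 0 else b t) := Finset.sum_comm
        _ = ∑ j : Fin k, ∑ t ∈ S \ K j i, b t := by
            refine Finset.sum_congr rfl (fun j _ => ?_)
            rw [Finset.sdiff_eq_filter, Finset.sum_filter]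
            apply Finset.sum_congr rfl
            intro t _
            by_cases hmem : t ∈ K j i
            · rw [if_pos hmem, if_neg (by simpa using hmem)]
            · rw [if_neg hmem, if_pos hmem]
      done
    calc (∑ i : Fin n, ∑ t ∈ S \ KI i, b t)
        ≤ ∑ i : Fin n, ∑ j : Fin k, ∑ t ∈ S \ K j i, b t := Finset.sum_le_sum (fun i _ => hpt i)
      _ = ∑ j : Fin k, ∑ i : Fin n, ∑ t ∈ S \ K j i, b t := Finset.sum_comm
      _ ≤ ∑ j : Fin k, ∑ t ∈ S, b t := Finset.sum_le_sum (fun j _ => hK2 j)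
      _ = κ * ∑ t ∈ S, b t := by
          rw [Finset.sum_const, Finset.card_univ, Fintype.card_fin, nsmul_eq_mul, hκdef]
  -- fiberwise revenue
  have hfiber : (∑ i : Fin n, ∑ t ∈ S.filter (fun t => player t = i), b t) = ∑ t ∈ S, b t :=
    Finset.sum_fiberwise S player b
  -- sum the key inequality
  have hsumkey : cc * (∑ i : Fin n, v i (O i))
      ≤ cc * (∑ i : Fin n, σ i) + (κ + 1) * ∑ t ∈ S, b t := by
    have := Finset.sum_le_sum (fun i (_ : i ∈ Finset.univ) => hkey i)
    rw [Finset.sum_add_distrib, Finset.sum_add_distrib, hfiber] at this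
    rw [← Finset.mul_sum, ← Finset.mul_sum] at this
    linarith [hbudget]
  -- sum the utility bound
  have hsumutil : (1 - cc) * (∑ i : Fin n, σ i)
      ≤ ∑ i : Fin n, (v i (A i) - ∑ t ∈ A i, (if t ∈ Sopt then cc * w i t else 0)) := by
    rw [Finset.mul_sum]
    exact Finset.sum_le_sum (fun i _ => hutil i)
  -- final arithmetic
  have hgoalcast : (1/(k+2) : ℝ) = 1 / (κ + 2) := by
    rw [hκdef]
  rw [ge_iff_le, hgoalcast]
  set oo : ℝ := ∑ i : Fin n, v i (O i) with hoodef
  set ss : ℝ := ∑ i : Fin n, σ i with hssdef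
  set R : ℝ := ∑ t ∈ S, b t with hRdef
  have hccval : cc * (κ + 2) = κ + 1 := by
    rw [hccdef]
    field_simp
  have h1c : 1 - cc = 1 / (κ + 2) := by
    rw [hccdef]
    field_simp
    ring
  have hκ2 : (0:ℝ) < κ + 2 := by linarith
  -- from hsumkey : cc*oo ≤ cc*ss + (κ+1)*R  ⇒ ss ≥ oo − (κ+2)*R
  have hss : oo - (κ + 2) * R ≤ ss := by
    have h2 : cc * (oo - (κ + 2) * R) ≤ cc * ss := by
      have : cc * ((κ+2) * R) = (κ+1) * R := by
        rw [← mul_assoc, hccval]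
      nlinarith [hsumkey]
    exact le_of_mul_le_mul_left (by linarith [h2]) hcc0
  calc 1 / (κ + 2) * oo - R = (1 - cc) * (oo - (κ+2) * R) + (1 - cc) * (κ+2) * R - R := by
        rw [h1c]
        field_simp
        ring
    _ ≤ (1 - cc) * ss + (1 - cc) * (κ+2) * R - R := by
        have := mul_le_mul_of_nonneg_left hss (by linarith [hcc1] : (0:ℝ) ≤ 1 - cc)
        linarith
    _ = (1 - cc) * ss := by
        rw [h1c]
        field_simp
        ring
    _ ≤ ∑ i : Fin n, (v i (A i) - ∑ t ∈ A i, (if t ∈ Sopt then cc * w i t else 0)) := hsumutil
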